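/- Let f be a holomorphic function on the open unit disc D(0,1) ⊂ ℂ, let M > 0, C ≥ 0 and 0 < r < 1. Assume |f(z)| ≤ e^M for all z ∈ D(0,1) and |f(0)| ≥ e^{-CM}. Then the number of zeros of f in the closed disc {z : |z| ≤ 1-r}, counted with multiplicities (i.e. the sum over zeros z of the order of vanishing of f at z), is at most (2/r)·(1+C)·M. -/

import Mathlib

open Metric Filter Function Set
open scoped Topology Classical

lemma jj_iteratedDeriv_eq {f : ℂ → ℂ} {p : FormalMultilinearSeries ℂ ℂ ℂ} {z : ℂ}
    (hp : HasFPowerSeriesAt f p z) (k : ℕ) :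
    iteratedDeriv k f z = k.factorial • p.coeff k := by
  obtain ⟨R, hR⟩ := hp
  have h := hR.factorial_smul (1 : ℂ) k
  rw [iteratedDeriv_eq_iteratedFDeriv]
  rw [← h]
  rfl

lemma jj_sInf_eq {f : ℂ → ℂ} {p : FormalMultilinearSeries ℂ ℂ ℂ} {z : ℂ}
    (hp : HasFPowerSeriesAt f p z) :
    sInf {k : ℕ | iteratedDeriv k f z ≠ 0} = p.order := by
  have hset : {k : ℕ | iteratedDeriv k f z ≠ 0} = {k : ℕ | p k ≠ 0} := by
    ext k
    have := jj_iteratedDeriv_eq hp k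
    simp only [Set.mem_setOf_eq, this, nsmul_eq_mul, ne_eq, mul_eq_zero, Nat.cast_eq_zero,
      Nat.factorial_ne_zero _, false_or, ← FormalMultilinearSeries.coeff_eq_zero]
  rw [hset]
  rfl

lemma jj_local_fact {f : ℂ → ℂ} {z : ℂ} (hz : AnalyticAt ℂ f z) :
    ∃ h : ℂ → ℂ, AnalyticAt ℂ h z ∧
      ∀ᶠ w in 𝓝 z, f w = (w - z) ^ (sInf {k : ℕ | iteratedDeriv k f z ≠ 0}) * h w := by
  obtain ⟨p, hp⟩ := hz
  rw [jj_sInf_eq hp]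
  refine ⟨(swap dslope z)^[p.order] f,
    ⟨_, hp.has_fpower_series_iterate_dslope_fslope p.order⟩, ?_⟩
  filter_upwards [Filter.Eventually.of_forall hp.eq_pow_order_mul_iterate_dslope] with w hw
  simpa [smul_eq_mul] using hw

lemma jj_div_pow {F : ℂ → ℂ} (hF : AnalyticOnNhd ℂ F (ball (0:ℂ) 1)) (z : ℂ) (k : ℕ)
    (h : ℂ → ℂ) (hh : AnalyticAt ℂ h z)
    (heq : ∀ᶠ w in 𝓝 z, F w = (w - z) ^ k * h w) :
    ∃ G : ℂ → ℂ, AnalyticOnNhd ℂ G (ball (0:ℂ) 1) ∧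
      ∀ w ∈ ball (0:ℂ) 1, F w = (w - z) ^ k * G w := by
  set G : ℂ → ℂ := fun w => if w = z then h z else F w / (w - z) ^ k with hG
  refine ⟨G, ?_, ?_⟩
  · intro w hw
    by_cases hwz : w = z
    · subst hwz
      refine hh.congr ?_
      filter_upwards [heq] with u hu
      by_cases huw : u = w
      · simp [hG, huw]
      · have hne : (u - w) ^ k ≠ 0 := pow_ne_zero _ (sub_ne_zero.mpr huw)
        simp [hG, huw, hu, mul_div_cancel_left₀ _ hne]
    · have h1 : AnalyticAt ℂ (fun u => F u / (u - z) ^ k) w :=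
        (hF w hw).div ((analyticAt_id.sub analyticAt_const).pow k)
          (pow_ne_zero _ (sub_ne_zero.mpr hwz))
      refine h1.congr ?_
      filter_upwards [isOpen_ne.mem_nhds hwz] with u hu
      simp [hG, hu]
  · intro w _
    by_cases hwz : w = z
    · subst hwz
      simpa [hG] using heq.self_of_nhds
    · have hne : (w - z) ^ k ≠ 0 := pow_ne_zero _ (sub_ne_zero.mpr hwz)
      simp [hG, hwz, mul_div_cancel₀ _ hne]

lemma jj_factor (m : ℂ → ℕ) (Z : Finset ℂ) (hZball : ∀ z ∈ Z, z ∈ ball (0:ℂ) 1) :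
    ∀ (F : ℂ → ℂ), AnalyticOnNhd ℂ F (ball (0:ℂ) 1) →
    (∀ z ∈ Z, ∃ h : ℂ → ℂ, AnalyticAt ℂ h z ∧
      ∀ᶠ w in 𝓝 z, F w = (w - z) ^ (m z) * h w) →
    ∃ g : ℂ → ℂ, AnalyticOnNhd ℂ g (ball (0:ℂ) 1) ∧
      ∀ w ∈ ball (0:ℂ) 1, F w = (∏ z ∈ Z, (w - z) ^ (m z)) * g w := by
  induction Z using Finset.induction_on with
  | empty => exact fun F hF _ => ⟨F, hF, fun w _ => by simp⟩
  | @insert a Z' ha ih =>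
    intro F hF hloc
    obtain ⟨h, hh, heq⟩ := hloc a (Finset.mem_insert_self a Z')
    obtain ⟨G, hG, hGeq⟩ := jj_div_pow hF a (m a) h hh heq
    have hloc' : ∀ z ∈ Z', ∃ h : ℂ → ℂ, AnalyticAt ℂ h z ∧
        ∀ᶠ w in 𝓝 z, G w = (w - z) ^ (m z) * h w := by
      intro z hz
      have hza : z ≠ a := fun hc => ha (hc ▸ hz)
      obtain ⟨h₂, hh₂, heq₂⟩ := hloc z (Finset.mem_insert_of_mem hz)
      refine ⟨fun w => h₂ w / (w - a) ^ (m a), hh₂.div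
        ((analyticAt_id.sub analyticAt_const).pow _)
        (pow_ne_zero _ (sub_ne_zero.mpr hza)), ?_⟩
      have hzball : z ∈ ball (0:ℂ) 1 := hZball z (Finset.mem_insert_of_mem hz)
      filter_upwards [heq₂, isOpen_ne.mem_nhds hza,
        (isOpen_ball).mem_nhds hzball] with u hu1 hu2 hu3
      have hne : (u - a) ^ (m a) ≠ 0 := pow_ne_zero _ (sub_ne_zero.mpr hu2)
      have := hGeq u hu3
      field_simp [hne] at this ⊢
      rw [← hu1, this]
    obtain ⟨g, hg, hgeq⟩ := ih (fun z hz => hZball z (Finset.mem_insert_of_mem hz)) G hG hloc'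
    refine ⟨g, hg, fun w hw => ?_⟩
    rw [Finset.prod_insert ha, hGeq w hw, hgeq w hw]
    ring

theorem stmt_12 (f : ℂ → ℂ) (M C r : ℝ)
    (hM : 0 < M) (hC : 0 ≤ C) (hr0 : 0 < r) (hr1 : r < 1)
    (hf : DifferentiableOn ℂ f (Metric.ball (0 : ℂ) 1))
    (hbound : ∀ z ∈ Metric.ball (0 : ℂ) 1, ‖f z‖ ≤ Real.exp M)
    (h0 : Real.exp (-(C * M)) ≤ ‖f 0‖) :
    ∃ Z : Finset ℂ,
      (∀ z : ℂ, z ∈ Z ↔ z ∈ Metric.closedBall (0 : ℂ) (1 - r) ∧ f z = 0) ∧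
      ((∑ z ∈ Z, sInf {k : ℕ | iteratedDeriv k f z ≠ 0} : ℕ) : ℝ) ≤
        (2 / r) * (1 + C) * M := by
  have hfa : AnalyticOnNhd ℂ f (ball (0:ℂ) 1) := hf.analyticOnNhd isOpen_ball
  have hf0 : f 0 ≠ 0 := by
    intro hc
    have := (Real.exp_pos (-(C * M))).trans_le h0
    rw [hc] at this
    simp at this
  have hsub : closedBall (0:ℂ) (1 - r) ⊆ ball (0:ℂ) 1 :=
    closedBall_subset_ball (by linarith)
  -- finiteness of the zero set
  set S : Set ℂ := {z : ℂ | z ∈ closedBall (0:ℂ) (1 - r) ∧ f z = 0} with hS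
  have hfin : S.Finite := by
    by_contra hinf
    rw [← Set.not_infinite, not_not] at hinf
    obtain ⟨x, hxK, hacc⟩ := hinf.exists_accPt_of_subset_isCompact
      (isCompact_closedBall (0:ℂ) (1 - r)) (fun z hz => hz.1)
    rw [accPt_iff_frequently] at hacc
    have hfreq : ∃ᶠ y in 𝓝[≠] x, f y = 0 := by
      rw [frequently_nhdsWithin_iff]
      exact hacc.mono fun y hy => ⟨hy.2.2, hy.1⟩
    have := hfa.eqOn_zero_of_preconnected_of_frequently_eq_zero
      (convex_ball (0:ℂ) 1).isPreconnected (hsub hxK) hfreq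
    exact hf0 (this (mem_ball_self one_pos))
  set m : ℂ → ℕ := fun z => sInf {k : ℕ | iteratedDeriv k f z ≠ 0} with hm
  refine ⟨hfin.toFinset, fun z => hfin.mem_toFinset, ?_⟩
  set Z := hfin.toFinset with hZ
  have hZmem : ∀ z ∈ Z, z ∈ closedBall (0:ℂ) (1 - r) ∧ f z = 0 :=
    fun z hz => hfin.mem_toFinset.mp hz
  have hZball : ∀ z ∈ Z, z ∈ ball (0:ℂ) 1 := fun z hz => hsub (hZmem z hz).1
  obtain ⟨g, hg, hgeq⟩ := jj_factor m Z hZball f hfa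
    (fun z hz => jj_local_fact (hfa z (hZball z hz)))
  set n : ℕ := ∑ z ∈ Z, m z with hn
  set ρ : ℝ := 1 - r / 2 with hρdef
  have hρ0 : 0 < ρ := by simp only [hρdef]; linarith
  have hρ1 : ρ < 1 := by simp only [hρdef]; linarith
  have hsρ : 1 - r < ρ := by simp only [hρdef]; linarith
  set Q : ℂ → ℂ := fun w => ∏ z ∈ Z, (((ρ:ℂ)^2 - (starRingEnd ℂ) z * w) / (ρ:ℂ)) ^ (m z) with hQ
  set P : ℂ → ℂ := fun w => ∏ z ∈ Z, (w - z) ^ (m z) with hP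
  set h : ℂ → ℂ := fun w => Q w * g w with hh
  -- differentiability
  have hQd : Differentiable ℂ Q := by
    intro w
    apply DifferentiableAt.fun_finsetProd
    intro i _
    apply DifferentiableAt.pow
    apply DifferentiableAt.div_const
    exact (differentiableAt_const _).sub ((differentiableAt_const _).mul differentiableAt_id)
  have hgd : DifferentiableOn ℂ h (ball (0:ℂ) 1) := by
    apply DifferentiableOn.mul hQd.differentiableOn
    exact fun x hx => ((hg x hx).differentiableAt).differentiableWithinAt
  have hcl : closure (ball (0:ℂ) ρ) ⊆ ball (0:ℂ) 1 := by
    rw [closure_ball (0:ℂ) hρ0.ne']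
    exact closedBall_subset_ball hρ1
  have hdc : DiffContOnCl ℂ h (ball (0:ℂ) ρ) := (hgd.mono hcl).diffContOnCl
  have habskey : ∀ w : ℂ, ‖w‖ = ρ → ‖Q w‖ = ‖P w‖ := by
    intro w hw
    rw [hQ, hP, norm_prod, norm_prod]
    apply Finset.prod_congr rfl
    intro z _
    rw [norm_pow, norm_pow]
    congr 1
    have h1 : ((ρ:ℂ)^2 - (starRingEnd ℂ) z * w) = (starRingEnd ℂ) (w - z) * w := by
      have h2 : ((starRingEnd ℂ) w) * w = ((ρ:ℂ))^2 := by
        rw [mul_comm, Complex.mul_conj]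
        norm_cast
        rw [Complex.normSq_eq_norm_sq, hw]
      rw [map_sub, sub_mul, h2]
    rw [h1, norm_div, norm_mul, Complex.norm_conj, hw, Complex.norm_real, Real.norm_of_nonneg hρ0.le,
      mul_div_assoc, div_self hρ0.ne', mul_one]
  have hfront : ∀ w ∈ frontier (ball (0:ℂ) ρ), ‖h w‖ ≤ Real.exp M := by
    intro w hwf
    rw [frontier_ball (0:ℂ) hρ0.ne'] at hwf
    have hw : ‖w‖ = ρ := by
      exact mem_sphere_zero_iff_norm.mp hwf
    have hwball : w ∈ ball (0:ℂ) 1 := by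
      rw [mem_ball_zero_iff, hw]
      exact hρ1
    have habs : ‖h w‖ = ‖f w‖ := by
      rw [hh, hgeq w hwball, norm_mul, norm_mul, habskey w hw, hP]
    rw [habs]
    exact hbound w hwball
  have hmax : ‖h 0‖ ≤ Real.exp M :=
    Complex.norm_le_of_forall_mem_frontier_norm_le isBounded_ball hdc hfront
      (subset_closure (mem_ball_self hρ0))
  have hQ0 : ‖Q 0‖ = ρ ^ n := by
    rw [hQ]
    simp only [mul_zero, sub_zero]
    rw [norm_prod, hn, ← Finset.prod_pow_eq_pow_sum]
    apply Finset.prod_congr rfl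
    intro z _
    rw [norm_pow]
    congr 1
    rw [sq, mul_div_assoc, div_self (by exact_mod_cast hρ0.ne' : (ρ:ℂ) ≠ 0), mul_one,
      Complex.norm_real, Real.norm_of_nonneg hρ0.le]
  have hP0 : ‖P 0‖ ≤ (1 - r) ^ n := by
    rw [hP, norm_prod, hn, ← Finset.prod_pow_eq_pow_sum]
    apply Finset.prod_le_prod
    · intro z _; positivity
    · intro z hz
      rw [norm_pow]
      apply pow_le_pow_left₀ (by positivity)
      have hz1 := (hZmem z hz).1
      rw [mem_closedBall_zero_iff] at hz1
      rw [zero_sub, norm_neg]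
      exact hz1
  have hfact0 := hgeq 0 (mem_ball_self one_pos)
  have hA : ρ ^ n * ‖g 0‖ ≤ Real.exp M := by
    calc ρ ^ n * ‖g 0‖ = ‖h 0‖ := by rw [hh, norm_mul, hQ0]
      _ = ‖h 0‖ := rfl
      _ ≤ Real.exp M := hmax
  have hB : Real.exp (-(C * M)) ≤ (1 - r) ^ n * ‖g 0‖ := by
    calc Real.exp (-(C*M)) ≤ ‖f 0‖ := h0
      _ = ‖P 0‖ * ‖g 0‖ := by rw [hfact0, norm_mul, hP]
      _ ≤ (1 - r) ^ n * ‖g 0‖ :=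
          mul_le_mul_of_nonneg_right hP0 (norm_nonneg _)
  have hEpos := Real.exp_pos (r/2)
  have hr2 : (0:ℝ) < 1 - r/2 := by linarith
  have hrho_ge : (1 - r) * Real.exp (r/2) ≤ ρ := by
    have h2 := Real.add_one_le_exp (-(r/2))
    have h3 : (1 - r/2) ≤ Real.exp (-(r/2)) := by linarith
    have h1 : (1 - r/2) * Real.exp (r/2) ≤ 1 := by
      calc (1 - r/2) * Real.exp (r/2) ≤ Real.exp (-(r/2)) * Real.exp (r/2) :=
            mul_le_mul_of_nonneg_right h3 hEpos.le
        _ = 1 := by rw [← Real.exp_add]; simp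
    have h4 : (1 - r) ≤ (1 - r/2)^2 := by nlinarith
    calc (1 - r) * Real.exp (r/2) ≤ (1 - r/2)^2 * Real.exp (r/2) :=
          mul_le_mul_of_nonneg_right h4 hEpos.le
      _ = (1 - r/2) * ((1 - r/2) * Real.exp (r/2)) := by ring
      _ ≤ (1 - r/2) * 1 := mul_le_mul_of_nonneg_left h1 hr2.le
      _ = ρ := by rw [mul_one]
  have hkey : Real.exp ((n:ℝ) * (r/2) + -(C*M)) ≤ Real.exp M := by
    rw [Real.exp_add]
    calc Real.exp ((n:ℝ)*(r/2)) * Real.exp (-(C*M))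
        ≤ Real.exp ((n:ℝ)*(r/2)) * ((1 - r)^n * ‖g 0‖) :=
          mul_le_mul_of_nonneg_left hB (Real.exp_pos _).le
      _ = ((1 - r) * Real.exp (r/2))^n * ‖g 0‖ := by
          rw [Real.exp_nat_mul, mul_pow]; ring
      _ ≤ ρ ^ n * ‖g 0‖ :=
          mul_le_mul_of_nonneg_right
            (pow_le_pow_left₀ (mul_nonneg (by linarith) hEpos.le) hrho_ge n) (norm_nonneg _)
      _ ≤ Real.exp M := hA
  have hfin2 : (n:ℝ) * (r/2) + -(C*M) ≤ M := Real.exp_le_exp.mp hkey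
  have hgoal : ((n:ℕ):ℝ) ≤ 2 / r * (1 + C) * M := by
    have h5 : (n:ℝ) * (r/2) * (2/r) ≤ (M + C*M) * (2/r) :=
      mul_le_mul_of_nonneg_right (by linarith) (by positivity)
    calc (n:ℝ) = (n:ℝ) * (r/2) * (2/r) := by field_simp
      _ ≤ (M + C*M) * (2/r) := h5
      _ = 2/r * (1+C) * M := by ring
  exact hgoal
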